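/- Let A ∈ R^{m×n}, let C ∈ R^{m×r}, let k be an integer with k < r, and let Q ∈ R^{m×r'} be a matrix with orthonormal columns spanning the column space of C. Let (QᵀA)_k denote a best rank-k approximation to QᵀA in the Frobenius norm. Then (i) ‖A − Q(QᵀA)_k‖_F² = ‖A − Π^F_{C,k}(A)‖_F², and (ii) ‖A − Q(QᵀA)_k‖₂² ≤ 2‖A − Π²_{C,k}(A)‖₂². -/

import Mathlib

open Matrix MeasureTheory

noncomputable def frobSq {m n : Type*} [Fintype m] [Fintype n] (A : Matrix m n ℝ) : ℝ :=
  ∑ i, ∑ j, A i j ^ 2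

noncomputable def spec {m n : Type*} [Fintype m] [Fintype n] [DecidableEq n]
    (A : Matrix m n ℝ) : ℝ :=
  ‖LinearMap.toContinuousLinearMap (Matrix.toEuclideanLin A)‖

noncomputable def specErr {m n : Type*} [Fintype m] [Fintype n] [DecidableEq n]
    (A : Matrix m n ℝ) (k : ℕ) : ℝ :=
  sInf {e : ℝ | ∃ X : Matrix m n ℝ, X.rank ≤ k ∧ e = spec (A - X)}

noncomputable def frobSqErr {m n : Type*} [Fintype m] [Fintype n]
    (A : Matrix m n ℝ) (k : ℕ) : ℝ :=
  sInf {e : ℝ | ∃ X : Matrix m n ℝ, X.rank ≤ k ∧ e = frobSq (A - X)}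

noncomputable def specErrIn {m n r : Type*} [Fintype m] [Fintype n] [DecidableEq n]
    [Fintype r] (A : Matrix m n ℝ) (C : Matrix m r ℝ) (k : ℕ) : ℝ :=
  sInf {e : ℝ | ∃ X : Matrix m n ℝ, X.rank ≤ k ∧
    LinearMap.range X.mulVecLin ≤ LinearMap.range C.mulVecLin ∧ e = spec (A - X)}

noncomputable def frobSqErrIn {m n r : Type*} [Fintype m] [Fintype n] [Fintype r]
    (A : Matrix m n ℝ) (C : Matrix m r ℝ) (k : ℕ) : ℝ :=
  sInf {e : ℝ | ∃ X : Matrix m n ℝ, X.rank ≤ k ∧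
    LinearMap.range X.mulVecLin ≤ LinearMap.range C.mulVecLin ∧ e = frobSq (A - X)}

def IsMoorePenrose {m n : Type*} [Fintype m] [Fintype n]
    (M : Matrix m n ℝ) (P : Matrix n m ℝ) : Prop :=
  M * P * M = M ∧ P * M * P = P ∧ (M * P)ᵀ = M * P ∧ (P * M)ᵀ = P * M


section Helpers
open Matrix Submodule Module
noncomputable section

def ve {N : ℕ} (f : Fin N → ℝ) : EuclideanSpace ℝ (Fin N) := (WithLp.equiv 2 _).symm f

def unve {N : ℕ} (x : EuclideanSpace ℝ (Fin N)) : Fin N → ℝ := WithLp.equiv 2 _ x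

def le' (N : ℕ) : (Fin N → ℝ) ≃ₗ[ℝ] EuclideanSpace ℝ (Fin N) :=
  (WithLp.linearEquiv 2 ℝ _).symm

lemma le'_apply {N : ℕ} (f : Fin N → ℝ) : le' N f = ve f := rfl

lemma ve_unve {N : ℕ} (x : EuclideanSpace ℝ (Fin N)) : ve (unve x) = x := rfl

lemma inner_ve {N : ℕ} (f g : Fin N → ℝ) : (inner ℝ (ve f) (ve g) : ℝ) = f ⬝ᵥ g := by
  simp [ve, PiLp.inner_apply, dotProduct, RCLike.inner_apply, mul_comm]

lemma norm_ve_sq {N : ℕ} (f : Fin N → ℝ) : ‖ve f‖ ^ 2 = f ⬝ᵥ f := by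
  rw [← real_inner_self_eq_norm_sq, inner_ve]

lemma dot_self_nonneg {N : ℕ} (f : Fin N → ℝ) : 0 ≤ f ⬝ᵥ f := by
  rw [← norm_ve_sq]; positivity

lemma dot_sq_le {N : ℕ} (f g : Fin N → ℝ) :
    (f ⬝ᵥ g) * (f ⬝ᵥ g) ≤ (f ⬝ᵥ f) * (g ⬝ᵥ g) := by
  simpa [inner_ve, norm_ve_sq] using real_inner_mul_inner_self_le (ve f) (ve g)

lemma spec_nonneg {m n : ℕ} (A : Matrix (Fin m) (Fin n) ℝ) : 0 ≤ spec A := norm_nonneg _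

lemma toEuclideanLin_ve {m n : ℕ} (A : Matrix (Fin m) (Fin n) ℝ) (v : Fin n → ℝ) :
    Matrix.toEuclideanLin A (ve v) = ve (A *ᵥ v) := rfl

lemma spec_dot {m n : ℕ} (A : Matrix (Fin m) (Fin n) ℝ) (v : Fin n → ℝ) :
    (A *ᵥ v) ⬝ᵥ (A *ᵥ v) ≤ spec A ^ 2 * (v ⬝ᵥ v) := by
  have h : ‖LinearMap.toContinuousLinearMap (Matrix.toEuclideanLin A) (ve v)‖ ≤ spec A * ‖ve v‖ :=
    ContinuousLinearMap.le_opNorm _ _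
  have h2 : ‖(Matrix.toEuclideanLin A) (ve v)‖ ≤ spec A * ‖ve v‖ := by simpa using h
  rw [toEuclideanLin_ve] at h2
  have := pow_le_pow_left₀ (norm_nonneg _) h2 2
  rw [mul_pow, norm_ve_sq, norm_ve_sq] at this
  exact this

lemma spec_le_of_dot {m n : ℕ} (A : Matrix (Fin m) (Fin n) ℝ) (c : ℝ) (hc : 0 ≤ c)
    (h : ∀ v : Fin n → ℝ, (A *ᵥ v) ⬝ᵥ (A *ᵥ v) ≤ c ^ 2 * (v ⬝ᵥ v)) : spec A ≤ c := by
  apply ContinuousLinearMap.opNorm_le_bound _ hc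
  intro x
  have h2 : ‖(Matrix.toEuclideanLin A) x‖ ≤ c * ‖x‖ := by
    have hx : x = ve (unve x) := rfl
    rw [hx, toEuclideanLin_ve]
    have := h (unve x)
    rw [← norm_ve_sq, ← norm_ve_sq] at this
    calc ‖ve (A *ᵥ unve x)‖ = √(‖ve (A *ᵥ unve x)‖^2) := by rw [Real.sqrt_sq (norm_nonneg _)]
      _ ≤ √(c^2 * ‖ve (unve x)‖^2) := Real.sqrt_le_sqrt this
      _ = c * ‖ve (unve x)‖ := by
          rw [Real.sqrt_mul (sq_nonneg c), Real.sqrt_sq hc, Real.sqrt_sq (norm_nonneg _)]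
  simpa using h2

lemma spec_transpose_dot {m n : ℕ} (A : Matrix (Fin m) (Fin n) ℝ) (y : Fin m → ℝ) :
    (Aᵀ *ᵥ y) ⬝ᵥ (Aᵀ *ᵥ y) ≤ spec A ^ 2 * (y ⬝ᵥ y) := by
  set z := Aᵀ *ᵥ y with hz
  have h1 : z ⬝ᵥ z = y ⬝ᵥ (A *ᵥ z) := by
    conv_rhs => rw [Matrix.dotProduct_mulVec, ← Matrix.mulVec_transpose]
  have hCS : (y ⬝ᵥ (A *ᵥ z)) * (y ⬝ᵥ (A *ᵥ z)) ≤ (y ⬝ᵥ y) * ((A *ᵥ z) ⬝ᵥ (A *ᵥ z)) :=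
    dot_sq_le _ _
  have hA : (A *ᵥ z) ⬝ᵥ (A *ᵥ z) ≤ spec A ^ 2 * (z ⬝ᵥ z) := spec_dot A z
  rcases (dot_self_nonneg z).eq_or_lt with hz0 | hz0
  · rw [← hz0]
    exact mul_nonneg (sq_nonneg _) (dot_self_nonneg y)
  · have hy0 : 0 ≤ y ⬝ᵥ y := dot_self_nonneg y
    nlinarith [hCS, hA, h1]

lemma ve_mulVec_eq_sum {m n : ℕ} (X : Matrix (Fin m) (Fin n) ℝ) (t : Fin n → ℝ) :
    ve (X *ᵥ t) = ∑ j, t j • ve (fun i => X i j) := by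
  have : X *ᵥ t = ∑ j, t j • (fun i => X i j) := by
    funext i
    simp [Matrix.mulVec, dotProduct, Finset.sum_apply, mul_comm]
  rw [this]
  change le' m _ = _
  simp only [map_sum, map_smul, le'_apply]

lemma ve_mulVec_mem {m n : ℕ} (X : Matrix (Fin m) (Fin n) ℝ)
    (W : Submodule ℝ (EuclideanSpace ℝ (Fin m)))
    (h : ∀ j, ve (fun i => X i j) ∈ W) (t : Fin n → ℝ) : ve (X *ᵥ t) ∈ W := by
  rw [ve_mulVec_eq_sum]
  exact Submodule.sum_mem _ fun j _ => Submodule.smul_mem _ _ (h j)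

lemma rank_le_of_cols_mem {m n : ℕ} (X : Matrix (Fin m) (Fin n) ℝ)
    (W : Submodule ℝ (EuclideanSpace ℝ (Fin m)))
    (h : ∀ j, ve (fun i => X i j) ∈ W) : X.rank ≤ finrank ℝ W := by
  have hmap : Submodule.map (le' m : (Fin m → ℝ) →ₗ[ℝ] EuclideanSpace ℝ (Fin m)) (LinearMap.range X.mulVecLin) ≤ W := by
    rintro x ⟨y, ⟨t, rfl⟩, rfl⟩
    exact ve_mulVec_mem X W h t
  calc X.rank = finrank ℝ (LinearMap.range X.mulVecLin) := rfl
    _ = finrank ℝ (Submodule.map (le' m : (Fin m → ℝ) →ₗ[ℝ] EuclideanSpace ℝ (Fin m)) (LinearMap.range X.mulVecLin)) :=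
        (LinearEquiv.finrank_map_eq _ _).symm
    _ ≤ finrank ℝ W := Submodule.finrank_mono hmap

lemma frobSq_cols {m n : ℕ} (X : Matrix (Fin m) (Fin n) ℝ) :
    frobSq X = ∑ j, ‖ve (fun i => X i j)‖ ^ 2 := by
  rw [frobSq, Finset.sum_comm]
  refine Finset.sum_congr rfl fun j _ => ?_
  rw [norm_ve_sq]
  simp [dotProduct, sq]

lemma dot_transpose_sum {m n : ℕ} (B : Matrix (Fin m) (Fin n) ℝ) (x : Fin m → ℝ) :
    (Bᵀ *ᵥ x) ⬝ᵥ (Bᵀ *ᵥ x) = ∑ j, (x ⬝ᵥ (fun i => B i j)) ^ 2 := by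
  simp [dotProduct, Matrix.mulVec, Matrix.transpose_apply, sq, mul_comm]

set_option maxHeartbeats 1000000 in
lemma frob_opt_spec_le {r' n k : ℕ} (B M N : Matrix (Fin r') (Fin n) ℝ)
    (hMrank : M.rank ≤ k) (hNrank : N.rank ≤ k)
    (hopt : ∀ M' : Matrix (Fin r') (Fin n) ℝ, M'.rank ≤ k →
      frobSq (B - M) ≤ frobSq (B - M')) :
    spec (B - M) ≤ spec (B - N) := by
  set s := spec (B - N) with hs
  have hs0 : 0 ≤ s := spec_nonneg _
  by_contra hcon
  obtain ⟨v, hv⟩ : ∃ v : Fin n → ℝ, s ^ 2 * (v ⬝ᵥ v) < ((B - M) *ᵥ v) ⬝ᵥ ((B - M) *ᵥ v) := by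
    by_contra h
    push_neg at h
    exact hcon (spec_le_of_dot _ s hs0 fun v => h v)
  set U : Submodule ℝ (EuclideanSpace ℝ (Fin r')) :=
    Submodule.map (le' r' : (Fin r' → ℝ) →ₗ[ℝ] EuclideanSpace ℝ (Fin r')) (LinearMap.range M.mulVecLin) with hU
  have hUfin : finrank ℝ U = M.rank := LinearEquiv.finrank_map_eq _ _
  set bcol : Fin n → EuclideanSpace ℝ (Fin r') := fun j => ve (fun i => B i j) with hbcol
  set mcol : Fin n → EuclideanSpace ℝ (Fin r') := fun j => ve (fun i => M i j) with hmcol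
  set p : EuclideanSpace ℝ (Fin r') → EuclideanSpace ℝ (Fin r') :=
    fun x => (orthogonalProjection U x : EuclideanSpace ℝ (Fin r')) with hp
  have hpmem : ∀ x, p x ∈ U := fun x => SetLike.coe_mem _
  have hporth : ∀ x, x - p x ∈ Uᗮ := fun x => Submodule.sub_starProjection_mem_orthogonal (K := U) x
  have hm_mem : ∀ j, mcol j ∈ U := by
    intro j
    have : (fun i => M i j) = M *ᵥ Pi.single j 1 := by
      funext i; simp [Matrix.mulVec_single]
    rw [hmcol]
    simp only [this]
    exact ⟨M *ᵥ Pi.single j 1, LinearMap.mem_range_self _ _, rfl⟩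
  -- the projected matrix
  set M₀ : Matrix (Fin r') (Fin n) ℝ := Matrix.of fun i j => unve (p (bcol j)) i with hM₀
  have hM₀col : ∀ j, ve (fun i => M₀ i j) = p (bcol j) := fun j => rfl
  have hM₀rank : M₀.rank ≤ k := by
    refine le_trans (rank_le_of_cols_mem M₀ U fun j => ?_) (by rw [hUfin]; exact hMrank)
    rw [hM₀col]; exact hpmem _
  -- Pythagoras per column, and optimality forces M = M₀ columnwise
  have hcolpy : ∀ j, ‖bcol j - mcol j‖^2
      = ‖bcol j - p (bcol j)‖^2 + ‖p (bcol j) - mcol j‖^2 := by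
    intro j
    have h2 : p (bcol j) - mcol j ∈ U := Submodule.sub_mem _ (hpmem _) (hm_mem j)
    have h3 : (inner ℝ (bcol j - p (bcol j)) (p (bcol j) - mcol j) : ℝ) = 0 :=
      Submodule.inner_left_of_mem_orthogonal h2 (hporth _)
    have h4 : bcol j - mcol j = (bcol j - p (bcol j)) + (p (bcol j) - mcol j) := by abel
    rw [h4, norm_add_sq_real, h3]
    ring
  have hfrM : frobSq (B - M) = ∑ j, ‖bcol j - mcol j‖^2 := by
    rw [frobSq_cols]
    exact Finset.sum_congr rfl fun j _ => rfl
  have hfrM₀ : frobSq (B - M₀) = ∑ j, ‖bcol j - p (bcol j)‖^2 := by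
    rw [frobSq_cols]
    exact Finset.sum_congr rfl fun j _ => rfl
  have hmp : ∀ j, mcol j = p (bcol j) := by
    have hle := hopt M₀ hM₀rank
    rw [hfrM, hfrM₀] at hle
    have hsum : ∑ j, ‖bcol j - mcol j‖^2 = ∑ j, ‖bcol j - p (bcol j)‖^2
        + ∑ j, ‖p (bcol j) - mcol j‖^2 := by
      rw [← Finset.sum_add_distrib]
      exact Finset.sum_congr rfl fun j _ => hcolpy j
    have hzero : ∑ j, ‖p (bcol j) - mcol j‖^2 ≤ 0 := by linarith
    have := (Finset.sum_eq_zero_iff_of_nonneg (fun j _ => sq_nonneg ‖p (bcol j) - mcol j‖)).1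
      (le_antisymm hzero (Finset.sum_nonneg fun j _ => sq_nonneg _))
    intro j
    have hj := this j (Finset.mem_univ j)
    have : p (bcol j) - mcol j = 0 := by
      have := sq_eq_zero_iff.1 hj
      simpa [norm_eq_zero] using this
    exact (sub_eq_zero.1 this).symm
  -- the residual vector u
  set u : Fin r' → ℝ := (B - M) *ᵥ v with hu
  have huU : ve u ∈ Uᗮ := by
    rw [hu]
    apply ve_mulVec_mem
    intro j
    have hcoleq : ve (fun i => (B - M) i j) = bcol j - mcol j := rfl
    rw [hcoleq, hmp j]
    exact hporth _
  have huu_pos : 0 < u ⬝ᵥ u :=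
    lt_of_le_of_lt (mul_nonneg (sq_nonneg s) (dot_self_nonneg v)) hv
  have hv0 : 0 < v ⬝ᵥ v := by
    rcases (dot_self_nonneg v).eq_or_lt with h0 | h0
    · exfalso
      have hnv : ‖ve v‖ ^ 2 = 0 := by rw [norm_ve_sq]; exact h0.symm
      have hvev : ve v = 0 := norm_eq_zero.1 ((pow_eq_zero_iff (two_ne_zero)).1 hnv)
      have hv' : v = 0 := congrArg unve hvev
      rw [hv', Matrix.mulVec_zero] at hu
      rw [hu] at huu_pos
      simpa using huu_pos
    · exact h0
  have hBu : u ⬝ᵥ (B *ᵥ v) = u ⬝ᵥ u := by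
    have hBsplit : B *ᵥ v = (B - M) *ᵥ v + M *ᵥ v := by
      rw [← Matrix.add_mulVec, sub_add_cancel]
    rw [hBsplit, dotProduct_add, ← hu]
    have h0 : u ⬝ᵥ (M *ᵥ v) = 0 := by
      have hmem : ve (M *ᵥ v) ∈ U := ⟨M *ᵥ v, LinearMap.mem_range_self _ _, rfl⟩
      have h := Submodule.inner_left_of_mem_orthogonal hmem huU
      rw [inner_ve] at h
      exact h
    rw [h0, add_zero]
  have hBtu : s ^ 2 * (u ⬝ᵥ u) < (Bᵀ *ᵥ u) ⬝ᵥ (Bᵀ *ᵥ u) := by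
    have h1 : u ⬝ᵥ (B *ᵥ v) = (Bᵀ *ᵥ u) ⬝ᵥ v := by
      rw [Matrix.dotProduct_mulVec, ← Matrix.mulVec_transpose]
    have h2 : (u ⬝ᵥ u) * (u ⬝ᵥ u) ≤ ((Bᵀ *ᵥ u) ⬝ᵥ (Bᵀ *ᵥ u)) * (v ⬝ᵥ v) := by
      rw [← hBu, h1]
      exact dot_sq_le _ _
    have h3 : (s ^ 2 * (u ⬝ᵥ u)) * (v ⬝ᵥ v) < ((Bᵀ *ᵥ u) ⬝ᵥ (Bᵀ *ᵥ u)) * (v ⬝ᵥ v) := by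
      nlinarith [mul_lt_mul_of_pos_right hv huu_pos, h2]
    exact lt_of_mul_lt_mul_right h3 (le_of_lt hv0)
  have huE0 : ve u ≠ 0 := by
    intro h
    have hu0 : u = 0 := congrArg unve h
    rw [hu0] at huu_pos
    simp at huu_pos
  set W : Submodule ℝ (EuclideanSpace ℝ (Fin r')) := U ⊔ (ℝ ∙ (ve u)) with hW
  have hspan1 : finrank ℝ ↥(ℝ ∙ (ve u)) = 1 := finrank_span_singleton huE0
  have hdisj : Disjoint U (ℝ ∙ (ve u)) :=
    (Submodule.orthogonal_disjoint U).mono_right ((Submodule.span_singleton_le_iff_mem _ _).2 huU)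
  have hWfin : finrank ℝ ↥W = finrank ℝ ↥U + 1 := by
    have h := Submodule.finrank_sup_add_finrank_inf_eq U (ℝ ∙ (ve u))
    rw [hdisj.eq_bot, finrank_bot, hspan1, ← hW] at h
    omega
  have huW : ve u ∈ W := le_sup_right (α := Submodule ℝ (EuclideanSpace ℝ (Fin r'))) (Submodule.mem_span_singleton_self (ve u))
  have hUW : U ≤ W := le_sup_left
  -- choose the auxiliary vector y
  obtain ⟨y, hyW, hyB, hyrank⟩ : ∃ y : EuclideanSpace ℝ (Fin r'), y ∈ W ∧
      ((Bᵀ *ᵥ unve y) ⬝ᵥ (Bᵀ *ᵥ unve y) ≤ s ^ 2 * (unve y ⬝ᵥ unve y)) ∧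
      (∀ X : Matrix (Fin r') (Fin n) ℝ,
        (∀ j, ve (fun i => X i j) ∈ W ∧ (inner ℝ y (ve fun i => X i j) : ℝ) = 0) →
          X.rank ≤ k) := by
    rcases lt_or_ge (finrank ℝ ↥U) k with hd | hd
    · refine ⟨0, Submodule.zero_mem _, ?_, ?_⟩
      · have h0 : unve (0 : EuclideanSpace ℝ (Fin r')) = 0 := rfl
        rw [h0, Matrix.mulVec_zero]
        simp [dotProduct]
      · intro X hX
        refine le_trans (rank_le_of_cols_mem X W fun j => (hX j).1) ?_
        rw [hWfin]
        omega
    · have hdk : finrank ℝ ↥U = k := le_antisymm (hUfin ▸ hMrank) hd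
      set K : Submodule ℝ (EuclideanSpace ℝ (Fin r')) :=
        Submodule.map (le' r' : (Fin r' → ℝ) →ₗ[ℝ] EuclideanSpace ℝ (Fin r')) (LinearMap.ker (Nᵀ).mulVecLin) with hK
      have hKfin : finrank ℝ ↥K = finrank ℝ ↥(LinearMap.ker (Nᵀ).mulVecLin) :=
        LinearEquiv.finrank_map_eq _ _
      have hker : Nᵀ.rank + finrank ℝ ↥(LinearMap.ker (Nᵀ).mulVecLin) = r' := by
        have h := LinearMap.finrank_range_add_finrank_ker (Nᵀ.mulVecLin)
        rw [Module.finrank_fin_fun] at h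
        rw [Matrix.rank]
        exact h
      have hNTrank : Nᵀ.rank = N.rank := Matrix.rank_transpose N
      have hWK : 0 < finrank ℝ ↥(W ⊓ K) := by
        have hsup := Submodule.finrank_sup_add_finrank_inf_eq W K
        have hle2 : finrank ℝ ↥(W ⊔ K) ≤ r' := by
          have h := Submodule.finrank_le (W ⊔ K)
          rwa [finrank_euclideanSpace_fin] at h
        omega
      obtain ⟨x, hx0⟩ := Module.finrank_pos_iff_exists_ne_zero.1 hWK
      obtain ⟨y, hyWK⟩ := x
      have hyW : y ∈ W := hyWK.1
      have hyK : y ∈ K := hyWK.2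
      have hyne : y ≠ 0 := fun h => hx0 (Subtype.ext h)
      refine ⟨y, hyW, ?_, ?_⟩
      · obtain ⟨w, hwker, hwy⟩ := hyK
        have hwy' : unve y = w := by rw [← hwy]; rfl
        rw [hwy']
        have hNw : Nᵀ *ᵥ w = 0 := hwker
        have hBw : Bᵀ *ᵥ w = (B - N)ᵀ *ᵥ w := by
          rw [Matrix.transpose_sub, Matrix.sub_mulVec, hNw, sub_zero]
        rw [hBw]
        exact spec_transpose_dot (B - N) w
      · intro X hX
        have hcols : ∀ j, ve (fun i => X i j) ∈ W ⊓ (ℝ ∙ y)ᗮ := fun j =>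
          ⟨(hX j).1, Submodule.mem_orthogonal_singleton_iff_inner_left.2
            (by rw [real_inner_comm]; exact (hX j).2)⟩
        have hlt : W ⊓ (ℝ ∙ y)ᗮ < W := by
          refine lt_of_le_of_ne inf_le_left fun h => ?_
          have hyW' : y ∈ W ⊓ (ℝ ∙ y)ᗮ := by rw [h]; exact hyW
          have h0 := Submodule.mem_orthogonal_singleton_iff_inner_left.1 hyW'.2
          exact hyne (inner_self_eq_zero.1 h0)
        have hlt2 : finrank ℝ ↥(W ⊓ (ℝ ∙ y)ᗮ) < finrank ℝ ↥W :=
          Submodule.finrank_lt_finrank_of_lt hlt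
        refine le_trans (rank_le_of_cols_mem X _ hcols) ?_
        omega
  -- decompose y over W = U ⊔ span(ve u)
  obtain ⟨q, hqU, z, hz, hyqz⟩ := Submodule.mem_sup.1 hyW
  obtain ⟨t, rfl⟩ := Submodule.mem_span_singleton.1 hz
  have hyd : y = q + t • ve u := hyqz.symm
  set du : ℝ := u ⬝ᵥ u with hdu
  set ib : Fin n → ℝ := fun j => inner ℝ (ve u) (bcol j) with hib
  set yy : ℝ := inner ℝ y y with hyy
  set yb : Fin n → ℝ := fun j => inner ℝ y (bcol j) with hyb
  set α : Fin n → ℝ := fun j => ib j / du with hα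
  set γ : Fin n → ℝ := fun j => yb j / yy with hγ
  set c : Fin n → EuclideanSpace ℝ (Fin r') :=
    fun j => p (bcol j) + α j • ve u - γ j • y with hc
  set M' : Matrix (Fin r') (Fin n) ℝ := Matrix.of fun i j => unve (c j) i with hM'
  have hM'col : ∀ j, ve (fun i => M' i j) = c j := fun j => rfl
  have hdu0 : du ≠ 0 := ne_of_gt huu_pos
  -- basic inner ℝ product facts
  have hqu : (inner ℝ q (ve u) : ℝ) = 0 := Submodule.inner_right_of_mem_orthogonal hqU huU
  have hupb : ∀ j, (inner ℝ (ve u) (p (bcol j)) : ℝ) = 0 := fun j =>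
    Submodule.inner_left_of_mem_orthogonal (hpmem (bcol j)) huU
  have hqe : ∀ j, (inner ℝ q (bcol j - p (bcol j)) : ℝ) = 0 := fun j =>
    Submodule.inner_right_of_mem_orthogonal hqU (hporth (bcol j))
  have hqb : ∀ j, (inner ℝ q (bcol j) : ℝ) = inner ℝ q (p (bcol j)) := by
    intro j
    have h := hqe j
    rw [inner_sub_right] at h
    linarith
  have hyu : (inner ℝ y (ve u) : ℝ) = t * du := by
    rw [hyd, inner_add_left, real_inner_smul_left, hqu, zero_add, inner_ve]
  have hueb : ∀ j, (inner ℝ (ve u) (bcol j - p (bcol j)) : ℝ) = ib j := by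
    intro j
    rw [inner_sub_right, hupb j, sub_zero, hib]
  have hypb : ∀ j, (inner ℝ y (p (bcol j)) : ℝ) = inner ℝ q (p (bcol j)) := by
    intro j
    rw [hyd, inner_add_left, real_inner_smul_left, hupb j, mul_zero, add_zero]
  have hybq : ∀ j, yb j = inner ℝ q (p (bcol j)) + t * ib j := by
    intro j
    rw [hyb]
    simp only
    rw [hyd, inner_add_left, real_inner_smul_left, ← hqb j, hib]
  have hybyy : ∀ j, γ j * yy = yb j := by
    intro j
    by_cases h0 : yy = 0
    · have hy0 : y = 0 := inner_self_eq_zero.1 h0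
      rw [h0, mul_zero, hyb]
      simp only [hy0, inner_zero_left]
    · rw [hγ]
      field_simp
  -- rank of M' is at most k
  have hM'rank : M'.rank ≤ k := by
    apply hyrank M'
    intro j
    rw [hM'col j]
    constructor
    · refine Submodule.sub_mem _ (Submodule.add_mem _ (hUW (hpmem (bcol j))) ?_) ?_
      · exact Submodule.smul_mem _ _ huW
      · exact Submodule.smul_mem _ _ hyW
    · rw [hc]
      simp only
      rw [inner_sub_right, inner_add_right, real_inner_smul_right, real_inner_smul_right,
        hypb j, hyu, ← hyy, hybyy j, hα]
      simp only
      rw [hybq j]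
      field_simp
      ring
  -- per-column norm computation
  have hcolval : ∀ j, ‖bcol j - c j‖ ^ 2
      = ‖bcol j - p (bcol j)‖ ^ 2 - ib j ^ 2 / du + γ j ^ 2 * yy := by
    intro j
    have hsplit : bcol j - c j = ((bcol j - p (bcol j)) - α j • ve u) + γ j • y := by
      rw [hc]; simp only; abel
    have horth : (inner ℝ ((bcol j - p (bcol j)) - α j • ve u) y : ℝ) = 0 := by
      rw [real_inner_comm]
      rw [inner_sub_right, real_inner_smul_right, hyu]
      rw [hyd, inner_add_left, real_inner_smul_left, hqe j, zero_add, hueb j, hα]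
      simp only
      field_simp
      ring
    have h1 : (inner ℝ (bcol j - p (bcol j)) (ve u) : ℝ) = ib j := by
      rw [real_inner_comm]; exact hueb j
    have h2 : ‖α j • ve u‖ ^ 2 = α j ^ 2 * du := by
      rw [norm_smul, mul_pow, norm_ve_sq, ← hdu]
      rw [Real.norm_eq_abs, sq_abs]
    have hyn : ‖y‖ ^ 2 = yy := by rw [hyy, real_inner_self_eq_norm_sq]
    have h3 : ‖γ j • y‖ ^ 2 = γ j ^ 2 * yy := by
      rw [norm_smul, mul_pow, hyn]
      rw [Real.norm_eq_abs, sq_abs]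
    rw [hsplit, norm_add_sq_real, real_inner_smul_right, horth]
    rw [norm_sub_sq_real, real_inner_smul_right, h1, h2, h3, hα]
    simp only
    field_simp
    ring
  -- sum the columns
  have hfrM' : frobSq (B - M') = ∑ j, ‖bcol j - c j‖ ^ 2 := by
    rw [frobSq_cols]
    exact Finset.sum_congr rfl fun j _ => rfl
  have hfrMe : frobSq (B - M) = ∑ j, ‖bcol j - p (bcol j)‖ ^ 2 := by
    rw [hfrM]
    exact Finset.sum_congr rfl fun j _ => by rw [hmp j]
  have hsum_u : ∑ j, ib j ^ 2 = (Bᵀ *ᵥ u) ⬝ᵥ (Bᵀ *ᵥ u) := by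
    rw [dot_transpose_sum]
    refine Finset.sum_congr rfl fun j _ => ?_
    rw [hib]
    simp only
    rw [← inner_ve u (fun i => B i j)]
  have hsum_y : ∑ j, yb j ^ 2 = (Bᵀ *ᵥ unve y) ⬝ᵥ (Bᵀ *ᵥ unve y) := by
    rw [dot_transpose_sum]
    refine Finset.sum_congr rfl fun j _ => ?_
    rw [hyb]
    simp only
    rw [← inner_ve (unve y) (fun i => B i j), ve_unve]
  have hyy_eq : yy = unve y ⬝ᵥ unve y := by
    rw [hyy, ← inner_ve (unve y) (unve y), ve_unve]
  -- the two bounds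
  have hbound_y : ∑ j, γ j ^ 2 * yy ≤ s ^ 2 := by
    by_cases h0 : yy = 0
    · have : ∀ j, γ j ^ 2 * yy = 0 := fun j => by rw [h0, mul_zero]
      rw [Finset.sum_congr rfl fun j _ => this j]
      simp [sq_nonneg]
    · have hyypos : 0 < yy := by
        rcases (real_inner_self_nonneg (x := y)).eq_or_lt with h | h
        · exact absurd h.symm h0
        · exact h
      have hval : ∀ j, γ j ^ 2 * yy = yb j ^ 2 / yy := by
        intro j
        rw [hγ]
        simp only
        field_simp
      rw [Finset.sum_congr rfl fun j _ => hval j, ← Finset.sum_div]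
      rw [hsum_y, div_le_iff₀ hyypos]
      calc (Bᵀ *ᵥ unve y) ⬝ᵥ (Bᵀ *ᵥ unve y) ≤ s ^ 2 * (unve y ⬝ᵥ unve y) := hyB
        _ = s ^ 2 * yy := by rw [hyy_eq]
  have hbound_u : s ^ 2 < (∑ j, ib j ^ 2) / du := by
    rw [hsum_u, lt_div_iff₀ huu_pos]
    exact hBtu
  -- final contradiction
  have hfinal : frobSq (B - M') < frobSq (B - M) := by
    rw [hfrM', hfrMe]
    have : ∑ j, ‖bcol j - c j‖ ^ 2
        = ∑ j, ‖bcol j - p (bcol j)‖ ^ 2 - (∑ j, ib j ^ 2) / du + ∑ j, γ j ^ 2 * yy := by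
      rw [Finset.sum_congr rfl fun j _ => hcolval j]
      rw [Finset.sum_add_distrib, Finset.sum_sub_distrib, Finset.sum_div]
    rw [this]
    linarith
  exact absurd (hopt M' hM'rank) (not_le.2 hfinal)

-- contraction lemmas
lemma dot_P_le {m r' : ℕ} (Q : Matrix (Fin m) (Fin r') ℝ) (hQ : Qᵀ * Q = 1) (w : Fin m → ℝ) :
    (Qᵀ *ᵥ w) ⬝ᵥ (Qᵀ *ᵥ w) = w ⬝ᵥ ((Q * Qᵀ) *ᵥ w)
    ∧ w ⬝ᵥ ((Q * Qᵀ) *ᵥ w) ≤ w ⬝ᵥ w := by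
  set P : Matrix (Fin m) (Fin m) ℝ := Q * Qᵀ with hP
  have h1 : (Qᵀ *ᵥ w) ⬝ᵥ (Qᵀ *ᵥ w) = w ⬝ᵥ (P *ᵥ w) := by
    rw [hP, ← Matrix.mulVec_mulVec, Matrix.dotProduct_mulVec, ← Matrix.mulVec_transpose,
      Matrix.transpose_transpose]
    exact dotProduct_comm _ _
  have hPP : (P *ᵥ w) ⬝ᵥ (P *ᵥ w) = w ⬝ᵥ (P *ᵥ w) := by
    rw [Matrix.dotProduct_mulVec (P *ᵥ w), ← Matrix.mulVec_transpose]
    have hPt : Pᵀ = P := by rw [hP, Matrix.transpose_mul, Matrix.transpose_transpose]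
    rw [hPt, Matrix.mulVec_mulVec]
    have hP2 : P * P = P := by
      rw [hP, Matrix.mul_assoc, ← Matrix.mul_assoc Qᵀ, hQ, Matrix.one_mul]
    rw [hP2, dotProduct_comm]
  refine ⟨h1, ?_⟩
  have hpos : 0 ≤ (w - P *ᵥ w) ⬝ᵥ (w - P *ᵥ w) := dot_self_nonneg _
  rw [sub_dotProduct, dotProduct_sub, dotProduct_sub] at hpos
  have hcomm : (P *ᵥ w) ⬝ᵥ w = w ⬝ᵥ (P *ᵥ w) := dotProduct_comm _ _
  linarith [hpos, hPP, hcomm, dot_self_nonneg (P *ᵥ w)]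

lemma spec_transpose_mul_le {m n r' : ℕ} (Q : Matrix (Fin m) (Fin r') ℝ) (hQ : Qᵀ * Q = 1)
    (Y : Matrix (Fin m) (Fin n) ℝ) : spec (Qᵀ * Y) ≤ spec Y := by
  apply spec_le_of_dot _ _ (spec_nonneg Y)
  intro v
  rw [← Matrix.mulVec_mulVec]
  calc (Qᵀ *ᵥ (Y *ᵥ v)) ⬝ᵥ (Qᵀ *ᵥ (Y *ᵥ v)) ≤ (Y *ᵥ v) ⬝ᵥ (Y *ᵥ v) := by
        obtain ⟨h1, h2⟩ := dot_P_le Q hQ (Y *ᵥ v)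
        linarith
    _ ≤ spec Y ^ 2 * (v ⬝ᵥ v) := spec_dot Y v

lemma spec_proj_mul_le {m n r' : ℕ} (Q : Matrix (Fin m) (Fin r') ℝ) (hQ : Qᵀ * Q = 1)
    (Y : Matrix (Fin m) (Fin n) ℝ) : spec ((1 - Q * Qᵀ) * Y) ≤ spec Y := by
  apply spec_le_of_dot _ _ (spec_nonneg Y)
  intro v
  rw [← Matrix.mulVec_mulVec]
  set w := Y *ᵥ v with hw
  have hsub : (1 - Q * Qᵀ) *ᵥ w = w - (Q * Qᵀ) *ᵥ w := by
    rw [Matrix.sub_mulVec, Matrix.one_mulVec]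
  calc ((1 - Q * Qᵀ) *ᵥ w) ⬝ᵥ ((1 - Q * Qᵀ) *ᵥ w)
      ≤ w ⬝ᵥ w := by
        obtain ⟨h1, h2⟩ := dot_P_le Q hQ w
        have hPP' : ((Q * Qᵀ) *ᵥ w) ⬝ᵥ ((Q * Qᵀ) *ᵥ w) = w ⬝ᵥ ((Q * Qᵀ) *ᵥ w) := by
          rw [Matrix.dotProduct_mulVec ((Q * Qᵀ) *ᵥ w), ← Matrix.mulVec_transpose]
          have hPt : (Q * Qᵀ)ᵀ = Q * Qᵀ := by
            rw [Matrix.transpose_mul, Matrix.transpose_transpose]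
          rw [hPt, Matrix.mulVec_mulVec]
          have hP2 : Q * Qᵀ * (Q * Qᵀ) = Q * Qᵀ := by
            rw [Matrix.mul_assoc, ← Matrix.mul_assoc Qᵀ, hQ, Matrix.one_mul]
          rw [hP2, dotProduct_comm]
        rw [hsub, sub_dotProduct, dotProduct_sub, dotProduct_sub]
        have hcomm : ((Q * Qᵀ) *ᵥ w) ⬝ᵥ w = w ⬝ᵥ ((Q * Qᵀ) *ᵥ w) := dotProduct_comm _ _
        linarith [dot_self_nonneg ((Q * Qᵀ) *ᵥ w)]
    _ ≤ spec Y ^ 2 * (v ⬝ᵥ v) := spec_dot Y v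

lemma spec_sq_pythagoras {m n r' : ℕ} (Q : Matrix (Fin m) (Fin r') ℝ) (hQ : Qᵀ * Q = 1)
    (G : Matrix (Fin m) (Fin n) ℝ) (hG : Qᵀ * G = 0) (D : Matrix (Fin r') (Fin n) ℝ) :
    spec (G + Q * D) ^ 2 ≤ spec G ^ 2 + spec D ^ 2 := by
  set c : ℝ := Real.sqrt (spec G ^ 2 + spec D ^ 2) with hc
  have hc0 : 0 ≤ c := Real.sqrt_nonneg _
  have hc2 : c ^ 2 = spec G ^ 2 + spec D ^ 2 :=
    Real.sq_sqrt (by positivity)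
  have hle : spec (G + Q * D) ≤ c := by
    apply spec_le_of_dot _ _ hc0
    intro v
    have hsplit : (G + Q * D) *ᵥ v = G *ᵥ v + Q *ᵥ (D *ᵥ v) := by
      rw [Matrix.add_mulVec, Matrix.mulVec_mulVec]
    have hcross : (G *ᵥ v) ⬝ᵥ (Q *ᵥ (D *ᵥ v)) = 0 := by
      rw [Matrix.dotProduct_mulVec, ← Matrix.mulVec_transpose, Matrix.mulVec_mulVec, hG]
      simp
    have hQiso : (Q *ᵥ (D *ᵥ v)) ⬝ᵥ (Q *ᵥ (D *ᵥ v)) = (D *ᵥ v) ⬝ᵥ (D *ᵥ v) := by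
      rw [Matrix.dotProduct_mulVec, ← Matrix.mulVec_transpose, Matrix.mulVec_mulVec, hQ,
        Matrix.one_mulVec]
    have hcross' : (Q *ᵥ (D *ᵥ v)) ⬝ᵥ (G *ᵥ v) = 0 := by
      rw [dotProduct_comm]; exact hcross
    rw [hsplit, add_dotProduct, dotProduct_add, dotProduct_add,
      hcross, hcross', hQiso, hc2]
    have h1 := spec_dot G v
    have h2 := spec_dot D v
    linarith
  calc spec (G + Q * D) ^ 2 ≤ c ^ 2 := pow_le_pow_left₀ (spec_nonneg _) hle 2
    _ = _ := hc2

lemma frobSq_eq_trace {m n : Type*} [Fintype m] [Fintype n] (A : Matrix m n ℝ) :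
    frobSq A = Matrix.trace (Aᵀ * A) := by
  rw [frobSq, Matrix.trace, Finset.sum_comm]
  refine Finset.sum_congr rfl fun j _ => ?_
  simp [Matrix.diag, Matrix.mul_apply, sq]

lemma frobSq_pythagoras {m n r' : ℕ} (Q : Matrix (Fin m) (Fin r') ℝ) (hQ : Qᵀ * Q = 1)
    (B : Matrix (Fin m) (Fin n) ℝ) (hB : Qᵀ * B = 0) (D : Matrix (Fin r') (Fin n) ℝ) :
    frobSq (B + Q * D) = frobSq B + frobSq D := by
  have hBQ : Bᵀ * Q = 0 := by
    have := congrArg Matrix.transpose hB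
    simpa [Matrix.transpose_mul] using this
  rw [frobSq_eq_trace, frobSq_eq_trace, frobSq_eq_trace]
  rw [Matrix.transpose_add, Matrix.add_mul, Matrix.mul_add, Matrix.mul_add,
    Matrix.transpose_mul]
  have h1 : Bᵀ * (Q * D) = 0 := by rw [← Matrix.mul_assoc, hBQ, Matrix.zero_mul]
  have h2 : Dᵀ * Qᵀ * B = 0 := by rw [Matrix.mul_assoc, hB, Matrix.mul_zero]
  have h3 : Dᵀ * Qᵀ * (Q * D) = Dᵀ * D := by
    rw [Matrix.mul_assoc, ← Matrix.mul_assoc Qᵀ, hQ, Matrix.one_mul]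
  rw [h1, h2, h3]
  simp [Matrix.trace_add]


end
end Helpers

/-- **Computing `Π^F_{C,k}(A)` exactly and `Π²_{C,k}(A)` up to a factor `2`**
(Lemma 2.2 of Boutsidis–Drineas–Magdon-Ismail): if `Q` has orthonormal columns spanning
the column space of `C`, and `M` is a best rank-`k` approximation of `QᵀA` in the
Frobenius norm, then `‖A - Q M‖_F² = ‖A - Π^F_{C,k}(A)‖_F²` and
`‖A - Q M‖₂² ≤ 2 ‖A - Π²_{C,k}(A)‖₂²`. -/
theorem best_rank_k_in_column_space
    {m n r r' : ℕ} (A : Matrix (Fin m) (Fin n) ℝ) (C : Matrix (Fin m) (Fin r) ℝ)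
    (k : ℕ) (hk : k < r)
    (Q : Matrix (Fin m) (Fin r') ℝ) (hQ : Qᵀ * Q = 1)
    (hspan : LinearMap.range Q.mulVecLin = LinearMap.range C.mulVecLin)
    (M : Matrix (Fin r') (Fin n) ℝ) (hMrank : M.rank ≤ k)
    (hMbest : ∀ N : Matrix (Fin r') (Fin n) ℝ, N.rank ≤ k →
      frobSq (Qᵀ * A - M) ≤ frobSq (Qᵀ * A - N)) :
    frobSq (A - Q * M) = frobSqErrIn A C k ∧
    spec (A - Q * M) ^ 2 ≤ 2 * specErrIn A C k ^ 2 := by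
  have hQX : ∀ X : Matrix (Fin m) (Fin n) ℝ,
      LinearMap.range X.mulVecLin ≤ LinearMap.range C.mulVecLin → Q * (Qᵀ * X) = X := by
    intro X hX
    rw [← hspan] at hX
    ext i j
    obtain ⟨v, hv⟩ := hX ⟨Pi.single j 1, rfl⟩
    have hcol : X *ᵥ Pi.single j 1 = Q *ᵥ v := hv.symm
    have h : (Q * (Qᵀ * X)) *ᵥ Pi.single j 1 = X *ᵥ Pi.single j 1 := by
      rw [← Matrix.mulVec_mulVec, ← Matrix.mulVec_mulVec, hcol, Matrix.mulVec_mulVec,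
        Matrix.mulVec_mulVec, Matrix.mul_assoc Q, hQ, Matrix.mul_one]
    have h2 := congrFun h i
    simpa [Matrix.mulVec_single] using h2
  set G : Matrix (Fin m) (Fin n) ℝ := A - Q * (Qᵀ * A) with hG
  have hQG : Qᵀ * G = 0 := by
    rw [hG, Matrix.mul_sub, ← Matrix.mul_assoc, hQ, Matrix.one_mul, sub_self]
  have hdec : ∀ D : Matrix (Fin r') (Fin n) ℝ, A - Q * D = G + Q * (Qᵀ * A - D) := by
    intro D
    rw [hG, Matrix.mul_sub]
    abel
  have hval : ∀ D : Matrix (Fin r') (Fin n) ℝ,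
      frobSq (A - Q * D) = frobSq G + frobSq (Qᵀ * A - D) := by
    intro D
    rw [hdec D, frobSq_pythagoras Q hQ G hQG]
  have hQMrank : (Q * M).rank ≤ k := le_trans (Matrix.rank_mul_le_right Q M) hMrank
  have hQMrange : LinearMap.range (Q * M).mulVecLin ≤ LinearMap.range C.mulVecLin := by
    rw [← hspan, Matrix.mulVecLin_mul]
    exact LinearMap.range_comp_le_range _ _
  constructor
  · have hmem : frobSq (A - Q * M) ∈ {e : ℝ | ∃ X : Matrix (Fin m) (Fin n) ℝ, X.rank ≤ k ∧
        LinearMap.range X.mulVecLin ≤ LinearMap.range C.mulVecLin ∧ e = frobSq (A - X)} :=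
      ⟨Q * M, hQMrank, hQMrange, rfl⟩
    have hlb : ∀ e ∈ {e : ℝ | ∃ X : Matrix (Fin m) (Fin n) ℝ, X.rank ≤ k ∧
        LinearMap.range X.mulVecLin ≤ LinearMap.range C.mulVecLin ∧ e = frobSq (A - X)},
        frobSq (A - Q * M) ≤ e := by
      rintro e ⟨X, hXrank, hXrange, rfl⟩
      have hXeq : A - X = A - Q * (Qᵀ * X) := by rw [hQX X hXrange]
      rw [hXeq, hval (Qᵀ * X), hval M]
      have h := hMbest (Qᵀ * X) (le_trans (Matrix.rank_mul_le_right Qᵀ X) hXrank)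
      linarith
    rw [frobSqErrIn]
    exact le_antisymm (le_csInf ⟨_, hmem⟩ hlb)
      (csInf_le ⟨frobSq (A - Q * M), fun e he => hlb e he⟩ hmem)
  · set T := spec (A - Q * M) with hT
    have hT0 : 0 ≤ T := spec_nonneg _
    have hkey : ∀ X : Matrix (Fin m) (Fin n) ℝ, X.rank ≤ k →
        LinearMap.range X.mulVecLin ≤ LinearMap.range C.mulVecLin →
        T ^ 2 ≤ 2 * spec (A - X) ^ 2 := by
      intro X hXrank hXrange
      have hpy : T ^ 2 ≤ spec G ^ 2 + spec (Qᵀ * A - M) ^ 2 := by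
        rw [hT, hdec M]
        exact spec_sq_pythagoras Q hQ G hQG _
      have hb1 : spec G ≤ spec (A - X) := by
        have hGeq : (1 - Q * Qᵀ) * (A - X) = G := by
          rw [Matrix.sub_mul, Matrix.one_mul, Matrix.mul_sub, Matrix.mul_assoc Q Qᵀ A,
            Matrix.mul_assoc Q Qᵀ X, hQX X hXrange, hG]
          abel
        rw [← hGeq]
        exact spec_proj_mul_le Q hQ (A - X)
      have hb2 : spec (Qᵀ * A - M) ≤ spec (A - X) := by
        have hNr : (Qᵀ * X).rank ≤ k := le_trans (Matrix.rank_mul_le_right Qᵀ X) hXrank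
        have h1 : spec (Qᵀ * A - M) ≤ spec (Qᵀ * A - Qᵀ * X) :=
          frob_opt_spec_le (Qᵀ * A) M (Qᵀ * X) hMrank hNr hMbest
        have h2 : spec (Qᵀ * A - Qᵀ * X) ≤ spec (A - X) := by
          rw [← Matrix.mul_sub]
          exact spec_transpose_mul_le Q hQ (A - X)
        linarith
      have h3 : spec G ^ 2 ≤ spec (A - X) ^ 2 := pow_le_pow_left₀ (spec_nonneg _) hb1 2
      have h4 : spec (Qᵀ * A - M) ^ 2 ≤ spec (A - X) ^ 2 :=
        pow_le_pow_left₀ (spec_nonneg _) hb2 2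
      linarith
    have hmem2 : spec (A - 0) ∈ {e : ℝ | ∃ X : Matrix (Fin m) (Fin n) ℝ, X.rank ≤ k ∧
        LinearMap.range X.mulVecLin ≤ LinearMap.range C.mulVecLin ∧ e = spec (A - X)} :=
      ⟨0, by simp [Matrix.rank_zero], by simp [Matrix.mulVecLin_zero], rfl⟩
    have hlb2 : ∀ e ∈ {e : ℝ | ∃ X : Matrix (Fin m) (Fin n) ℝ, X.rank ≤ k ∧
        LinearMap.range X.mulVecLin ≤ LinearMap.range C.mulVecLin ∧ e = spec (A - X)},
        T / Real.sqrt 2 ≤ e := by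
      rintro e ⟨X, hXr, hXs, rfl⟩
      have h := hkey X hXr hXs
      have he0 : 0 ≤ spec (A - X) := spec_nonneg _
      rw [div_le_iff₀ (by positivity : (0:ℝ) < Real.sqrt 2)]
      calc T = Real.sqrt (T ^ 2) := (Real.sqrt_sq hT0).symm
        _ ≤ Real.sqrt (2 * spec (A - X) ^ 2) := Real.sqrt_le_sqrt h
        _ = Real.sqrt 2 * spec (A - X) := by
            rw [Real.sqrt_mul (by norm_num : (0:ℝ) ≤ 2), Real.sqrt_sq he0]
        _ = spec (A - X) * Real.sqrt 2 := mul_comm _ _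
    have hsinf : T / Real.sqrt 2 ≤ specErrIn A C k := by
      rw [specErrIn]
      exact le_csInf ⟨_, hmem2⟩ hlb2
    have hI0 : 0 ≤ specErrIn A C k :=
      le_trans (div_nonneg hT0 (Real.sqrt_nonneg 2)) hsinf
    have hTle : T ≤ specErrIn A C k * Real.sqrt 2 :=
      (div_le_iff₀ (by positivity : (0:ℝ) < Real.sqrt 2)).1 hsinf
    calc T ^ 2 ≤ (specErrIn A C k * Real.sqrt 2) ^ 2 := pow_le_pow_left₀ hT0 hTle 2
      _ = 2 * specErrIn A C k ^ 2 := by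
          rw [mul_pow, Real.sq_sqrt (by norm_num : (0:ℝ) ≤ 2)]
          ring
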